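/- Let p > 1 and let X be a finite set of distinct non-negative integers with ord(X) = M > 0 (that is, t_L(X) = 0 for L < M and t_M(X) ≠ 0), and suppose |X| ≡ 0 (mod p^M). Then |X_R| = |X| / p^L for every 0 ≤ L ≤ M and every residue R mod p^L, where X_R = {x ∈ X : x ≡ R (mod p^L)}. -/

import Mathlib

/-- `hL p L X` is the number of hooks of `λ(X)` with length divisible by `p^L`. -/
def hL (p L : ℕ) (X : Finset ℕ) : ℕ :=
  ∑ x ∈ X, ((Finset.range x).filter fun y => y ∉ X ∧ p ^ L ∣ x - y).card

/-- `t_L(X) = h_L(X) - p h_{L+1}(X)`. -/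
def tN (p L : ℕ) (X : Finset ℕ) : ℕ := hL p L X - p * hL p (L + 1) X

open Finset

/-- Triangular number as a sum. -/
def C2 (n : ℕ) : ℕ := ∑ i ∈ Finset.range n, i




/-- Triangular number as a sum. -/
lemma C2_succ (n : ℕ) : C2 (n+1) = C2 n + n := Finset.sum_range_succ _ _

/-- A set of `n` distinct naturals has sum at least `C2 n`, with equality iff it is `range n`. -/
lemma key1 : ∀ n : ℕ, ∀ T : Finset ℕ, T.card = n →
    C2 n ≤ ∑ t ∈ T, t ∧ (∑ t ∈ T, t = C2 n → T = Finset.range n) := by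
  intro n
  induction n with
  | zero =>
    intro T hT
    rw [Finset.card_eq_zero] at hT
    subst hT; simp [C2]
  | succ n ih =>
    intro T hT
    have hne : T.Nonempty := Finset.card_pos.mp (by omega)
    set m := T.max' hne with hm
    have hmm : m ∈ T := T.max'_mem hne
    have hsub : T ⊆ Finset.range (m+1) := fun t ht =>
      Finset.mem_range.mpr (Nat.lt_succ_of_le (T.le_max' t ht))
    have hcle : n + 1 ≤ m + 1 := by
      have := Finset.card_le_card hsub
      simpa [hT] using this
    have hnm : n ≤ m := by omega
    have hT' : (T.erase m).card = n := by rw [Finset.card_erase_of_mem hmm]; omega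
    have hsum : (∑ t ∈ T.erase m, t) + m = ∑ t ∈ T, t := Finset.sum_erase_add T _ hmm
    obtain ⟨ih1, ih2⟩ := ih (T.erase m) hT'
    constructor
    · rw [C2_succ]; omega
    · intro heq
      rw [C2_succ] at heq
      have h1 : ∑ t ∈ T.erase m, t = C2 n := by omega
      have h2 : m = n := by omega
      have h3 := ih2 h1
      rw [← Finset.insert_erase hmm, h3, h2, Finset.range_add_one]

/-- Counting pairs within a finset. -/
lemma key2 : ∀ n : ℕ, ∀ S : Finset ℕ, S.card = n →
    ∑ x ∈ S, (S.filter (· < x)).card = C2 n := by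
  intro n
  induction n with
  | zero =>
    intro S hS
    rw [Finset.card_eq_zero] at hS
    subst hS; simp [C2]
  | succ n ih =>
    intro S hS
    have hne : S.Nonempty := Finset.card_pos.mp (by omega)
    set m := S.max' hne with hm
    have hmm : m ∈ S := S.max'_mem hne
    have hS' : (S.erase m).card = n := by rw [Finset.card_erase_of_mem hmm]; omega
    have hsum : (∑ x ∈ S.erase m, (S.filter (· < x)).card) + (S.filter (· < m)).card
        = ∑ x ∈ S, (S.filter (· < x)).card := Finset.sum_erase_add S _ hmm
    have hfm : S.filter (· < m) = S.erase m := by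
      ext y
      simp only [Finset.mem_filter, Finset.mem_erase]
      constructor
      · rintro ⟨hy, hlt⟩; exact ⟨by omega, hy⟩
      · rintro ⟨hne', hy⟩
        exact ⟨hy, lt_of_le_of_ne (S.le_max' y hy) hne'⟩
    have hinner : ∀ x ∈ S.erase m, (S.filter (· < x)).card = ((S.erase m).filter (· < x)).card := by
      intro x hx
      congr 1
      ext y
      simp only [Finset.mem_filter, Finset.mem_erase]
      constructor
      · rintro ⟨hy, hlt⟩
        have hxm : x ≤ m := S.le_max' x (Finset.mem_of_mem_erase hx)
        exact ⟨⟨by omega, hy⟩, hlt⟩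
      · rintro ⟨⟨_, hy⟩, hlt⟩; exact ⟨hy, hlt⟩
    rw [← hsum, Finset.sum_congr rfl hinner, ih _ hS', hfm, hS', C2_succ]

/-- The number of `y < x` with `q ∣ x - y` is `x / q`. -/
lemma key3 (q x : ℕ) (hq : 0 < q) :
    ((Finset.range x).filter (fun y => q ∣ x - y)).card = x / q := by
  have himg : (Finset.range x).filter (fun y => q ∣ x - y)
      = (Finset.range (x / q)).image (fun k => x - (k+1)*q) := by
    ext y
    simp only [Finset.mem_filter, Finset.mem_range, Finset.mem_image]
    constructor
    · rintro ⟨hyx, d, hd⟩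
      have hd0 : 0 < d := by
        rcases Nat.eq_zero_or_pos d with h | h
        · subst h; simp at hd; omega
        · exact h
      have hdq : d * q ≤ x := by rw [mul_comm]; omega
      refine ⟨d - 1, ?_, ?_⟩
      · have : d ≤ x / q := (Nat.le_div_iff_mul_le hq).mpr hdq
        omega
      · have h3 : d - 1 + 1 = d := by omega
        rw [h3, mul_comm]; omega
    · rintro ⟨k, hk, rfl⟩
      have hle : (k+1) * q ≤ x :=
        le_trans (Nat.mul_le_mul_right q (by omega)) (Nat.div_mul_le_self x q)
      have hpos : 0 < (k+1) * q := by positivity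
      refine ⟨by omega, k + 1, ?_⟩
      have hcomm : q * (k+1) = (k+1) * q := mul_comm _ _
      rw [hcomm]; omega
  rw [himg, Finset.card_image_of_injOn, Finset.card_range]
  intro a ha b hb hab
  simp only [Finset.coe_range, Set.mem_Iio] at ha hb
  have hab' : x - (a+1) * q = x - (b+1) * q := hab
  have ha' : (a+1) * q ≤ x :=
    le_trans (Nat.mul_le_mul_right q (by omega)) (Nat.div_mul_le_self x q)
  have hb' : (b+1) * q ≤ x :=
    le_trans (Nat.mul_le_mul_right q (by omega)) (Nat.div_mul_le_self x q)
  have heq : (a+1) * q = (b+1) * q := by omega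
  have := Nat.eq_of_mul_eq_mul_right hq heq
  omega



/-- Counting multiples of the form `j + p*k` below `p*d`. -/
lemma count_mod_eq (p d j : ℕ) (hp : 0 < p) (hj : j < p) :
    ((Finset.range (p*d)).filter (fun t => t % p = j)).card = d := by
  have himg : (Finset.range (p*d)).filter (fun t => t % p = j)
      = (Finset.range d).image (fun k => j + p*k) := by
    ext t
    simp only [Finset.mem_filter, Finset.mem_range, Finset.mem_image]
    constructor
    · rintro ⟨ht, hm⟩
      refine ⟨t / p, ?_, ?_⟩
      · exact Nat.div_lt_of_lt_mul ht
      · rw [← hm]; exact (Nat.mod_add_div t p)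
    · rintro ⟨k, hk, rfl⟩
      refine ⟨?_, ?_⟩
      · calc j + p*k < p + p*k := by omega
          _ = p*(k+1) := by ring
          _ ≤ p*d := Nat.mul_le_mul_left p (by omega)
      · rw [Nat.add_mul_mod_self_left, Nat.mod_eq_of_lt hj]
  rw [himg, Finset.card_image_of_injective _ (fun a b h => by
    have : p*a = p*b := by omega
    exact Nat.eq_of_mul_eq_mul_left hp this), Finset.card_range]

section Balanced
variable (p : ℕ) (m : ℕ → ℕ)

/-- The canonical set realizing counts `m j` in residue classes mod `p`. -/
noncomputable def Tset : Finset ℕ :=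
  (Finset.range p).biUnion (fun j => (Finset.range (m j)).image (fun k => j + p*k))

lemma Tset_disj (hp : 0 < p) : ∀ j ∈ Finset.range p, ∀ j' ∈ Finset.range p, j ≠ j' →
    Disjoint ((Finset.range (m j)).image (fun k => j + p*k))
      ((Finset.range (m j')).image (fun k => j' + p*k)) := by
  intro j hj j' hj' hne
  rw [Finset.mem_range] at hj hj'
  rw [Finset.disjoint_left]
  rintro t ht ht'
  simp only [Finset.mem_image, Finset.mem_range] at ht ht'
  obtain ⟨k, _, rfl⟩ := ht
  obtain ⟨k', _, hk'⟩ := ht'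
  apply hne
  have h1 : (j + p*k) % p = j := by rw [Nat.add_mul_mod_self_left, Nat.mod_eq_of_lt hj]
  have h2 : (j' + p*k') % p = j' := by rw [Nat.add_mul_mod_self_left, Nat.mod_eq_of_lt hj']
  rw [← h1, ← hk', h2]

lemma Tset_inj (hp : 0 < p) (j : ℕ) : Function.Injective (fun k => j + p*k) := by
  intro a b h
  simp only at h
  have : p*a = p*b := by omega
  exact Nat.eq_of_mul_eq_mul_left hp this

lemma Tset_card (hp : 0 < p) : (Tset p m).card = ∑ j ∈ Finset.range p, m j := by
  rw [Tset, Finset.card_biUnion (Tset_disj p m hp)]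
  exact Finset.sum_congr rfl fun j _ => by
    rw [Finset.card_image_of_injective _ (Tset_inj p hp j), Finset.card_range]

lemma Tset_sum (hp : 0 < p) :
    ∑ t ∈ Tset p m, t = ∑ j ∈ Finset.range p, (j * m j + p * C2 (m j)) := by
  rw [Tset, Finset.sum_biUnion (Tset_disj p m hp)]
  refine Finset.sum_congr rfl fun j _ => ?_
  rw [Finset.sum_image (fun a _ b _ h => Tset_inj p hp j h)]
  rw [Finset.sum_add_distrib, Finset.sum_const, Finset.card_range, ← Finset.mul_sum]
  simp [C2, mul_comm, smul_eq_mul]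

lemma balanced_le (hp : 0 < p) :
    C2 (∑ j ∈ Finset.range p, m j) ≤ ∑ j ∈ Finset.range p, (j * m j + p * C2 (m j)) := by
  rw [← Tset_sum p m hp, ← Tset_card p m hp]
  exact (key1 _ _ rfl).1

lemma balanced_eq (hp : 0 < p)
    (heq : ∑ j ∈ Finset.range p, (j * m j + p * C2 (m j)) = C2 (∑ j ∈ Finset.range p, m j))
    (hdvd : p ∣ ∑ j ∈ Finset.range p, m j) :
    ∀ j < p, m j = (∑ j ∈ Finset.range p, m j) / p := by
  intro j hj
  set n := ∑ j ∈ Finset.range p, m j with hn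
  have hrange : Tset p m = Finset.range n := by
    have h2 := (key1 (Tset p m).card (Tset p m) rfl).2
    rw [Tset_card p m hp] at h2
    exact h2 (by rw [Tset_sum p m hp, heq])
  have hfj : (Tset p m).filter (fun t => t % p = j)
      = (Finset.range (m j)).image (fun k => j + p*k) := by
    ext t
    simp only [Tset, Finset.mem_filter, Finset.mem_biUnion, Finset.mem_image,
      Finset.mem_range]
    constructor
    · rintro ⟨⟨j', hj', k, hk, rfl⟩, hm⟩
      have : (j' + p*k) % p = j' := by rw [Nat.add_mul_mod_self_left, Nat.mod_eq_of_lt hj']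
      have hjj : j' = j := by omega
      subst hjj
      exact ⟨k, hk, rfl⟩
    · rintro ⟨k, hk, rfl⟩
      refine ⟨⟨j, hj, k, hk, rfl⟩, by rw [Nat.add_mul_mod_self_left, Nat.mod_eq_of_lt hj]⟩
  obtain ⟨d, hd⟩ := hdvd
  have hcount : ((Finset.range n).filter (fun t => t % p = j)).card = d := by
    rw [hd]; exact count_mod_eq p d j hp hj
  have : m j = d := by
    rw [← Finset.card_range (m j),
      ← Finset.card_image_of_injective (Finset.range (m j)) (Tset_inj p hp j),
      ← hfj, hrange, hcount]
  rw [this, hd, Nat.mul_div_cancel_left _ hp]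

end Balanced



lemma star (p L : ℕ) (hp : 0 < p) (X : Finset ℕ) :
    hL p L X + ∑ R ∈ Finset.range (p^L), C2 ((X.filter (fun z => z % p^L = R)).card)
      = ∑ x ∈ X, x / p^L := by
  set q := p^L with hqdef
  have hq : 0 < q := pow_pos hp L
  have h1 : ∀ x ∈ X, ((Finset.range x).filter (fun y => y ∉ X ∧ q ∣ x - y)).card
      + ((Finset.range x).filter (fun y => y ∈ X ∧ q ∣ x - y)).card = x / q := by
    intro x _
    have hsplit := Finset.card_filter_add_card_filter_not
      (s := (Finset.range x).filter (fun y => q ∣ x - y)) (p := fun y => y ∈ X)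
    rw [Finset.filter_filter, Finset.filter_filter] at hsplit
    have e1 : (Finset.range x).filter (fun y => y ∉ X ∧ q ∣ x - y)
        = (Finset.range x).filter (fun y => q ∣ x - y ∧ ¬ y ∈ X) :=
      Finset.filter_congr (fun y _ => by tauto)
    have e2 : (Finset.range x).filter (fun y => y ∈ X ∧ q ∣ x - y)
        = (Finset.range x).filter (fun y => q ∣ x - y ∧ y ∈ X) :=
      Finset.filter_congr (fun y _ => by tauto)
    rw [e1, e2, add_comm, hsplit, key3 q x hq]
  have h2 := Finset.sum_congr rfl h1
  rw [Finset.sum_add_distrib] at h2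
  have h3 : ∑ x ∈ X, ((Finset.range x).filter (fun y => y ∈ X ∧ q ∣ x - y)).card
      = ∑ R ∈ Finset.range q, C2 ((X.filter (fun z => z % q = R)).card) := by
    rw [← Finset.sum_fiberwise_of_maps_to
      (g := fun x => x % q) (t := Finset.range q)
      (fun x _ => Finset.mem_range.mpr (Nat.mod_lt x hq))
      (fun x => ((Finset.range x).filter (fun y => y ∈ X ∧ q ∣ x - y)).card)]
    refine Finset.sum_congr rfl fun R hR => ?_
    have hinner : ∀ x ∈ X.filter (fun z => z % q = R),
        ((Finset.range x).filter (fun y => y ∈ X ∧ q ∣ x - y)).card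
        = ((X.filter (fun z => z % q = R)).filter (· < x)).card := by
      intro x hx
      rw [Finset.mem_filter] at hx
      obtain ⟨hxX, hxR⟩ := hx
      congr 1
      ext y
      simp only [Finset.mem_filter, Finset.mem_range]
      constructor
      · rintro ⟨hyx, hyX, hdvd⟩
        have hmod : y % q = x % q := (Nat.modEq_iff_dvd' (le_of_lt hyx)).mpr hdvd
        exact ⟨⟨hyX, by rw [hmod, hxR]⟩, hyx⟩
      · rintro ⟨⟨hyX, hyR⟩, hyx⟩
        refine ⟨hyx, hyX, (Nat.modEq_iff_dvd' (le_of_lt hyx)).mp ?_⟩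
        show y % q = x % q
        rw [hyR, hxR]
    rw [Finset.sum_congr rfl hinner, key2 _ _ rfl]
  rw [← h3]
  exact h2



lemma sum_range_mul {M : Type*} [AddCommMonoid M] (q p : ℕ) (hq : 0 < q) (f : ℕ → M) :
    ∑ S ∈ Finset.range (q*p), f S = ∑ R ∈ Finset.range q, ∑ j ∈ Finset.range p, f (R + q*j) := by
  rw [← Finset.sum_product']
  refine Finset.sum_nbij' (i := fun S => (S % q, S / q)) (j := fun P => P.1 + q * P.2)
    ?_ ?_ ?_ ?_ ?_
  · intro S hS
    rw [Finset.mem_range] at hS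
    rw [Finset.mem_product, Finset.mem_range, Finset.mem_range]
    exact ⟨Nat.mod_lt S hq, (Nat.div_lt_iff_lt_mul hq).mpr (by rwa [mul_comm])⟩
  · rintro ⟨R, j⟩ hP
    rw [Finset.mem_product, Finset.mem_range, Finset.mem_range] at hP
    rw [Finset.mem_range]
    calc R + q*j < q + q*j := by omega
      _ = q*(j+1) := by ring
      _ ≤ q*p := Nat.mul_le_mul_left q (by omega)
  · intro S _
    simp only
    exact Nat.mod_add_div S q
  · rintro ⟨R, j⟩ hP
    rw [Finset.mem_product, Finset.mem_range, Finset.mem_range] at hP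
    simp only
    rw [Nat.add_mul_mod_self_left, Nat.mod_eq_of_lt hP.1,
      Nat.add_mul_div_left _ _ hq, Nat.div_eq_of_lt hP.1]
    simp
  · intro S _
    simp only
    rw [Nat.mod_add_div S q]

lemma Dsum (q p : ℕ) (hq : 0 < q) (hp : 0 < p) (X : Finset ℕ) :
    ∑ x ∈ X, (x / q % p)
      = ∑ S ∈ Finset.range (q*p), (S / q) * (X.filter (fun z => z % (q*p) = S)).card := by
  have hqp : 0 < q * p := by positivity
  rw [← Finset.sum_fiberwise_of_maps_to
    (g := fun x => x % (q*p)) (t := Finset.range (q*p))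
    (fun x _ => Finset.mem_range.mpr (Nat.mod_lt x hqp)) (fun x => x / q % p)]
  refine Finset.sum_congr rfl fun S hS => ?_
  have hinner : ∀ x ∈ X.filter (fun z => z % (q*p) = S), x / q % p = S / q := by
    intro x hx
    rw [Finset.mem_filter] at hx
    rw [← hx.2, Nat.mod_mul_right_div_self]
  rw [Finset.sum_congr rfl hinner, Finset.sum_const, smul_eq_mul, mul_comm]

lemma fiber_split (q p R : ℕ) (hq : 0 < q) (hp : 0 < p) (hR : R < q) (X : Finset ℕ) :
    (X.filter (fun z => z % q = R)).card
      = ∑ j ∈ Finset.range p, (X.filter (fun z => z % (q*p) = R + q*j)).card := by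
  have hdecomp : ∀ z : ℕ, z % (q*p) = q * (z / q % p) + z % q := by
    intro z
    conv_lhs => rw [← Nat.div_add_mod (z % (q*p)) q]
    rw [Nat.mod_mul_right_div_self, Nat.mod_mod_of_dvd _ (dvd_mul_right q p)]
  have hcard := Finset.card_eq_sum_card_fiberwise
    (f := fun x => x / q % p) (s := X.filter (fun z => z % q = R)) (t := Finset.range p)
    (fun x _ => Finset.mem_range.mpr (Nat.mod_lt _ hp))
  rw [hcard]
  refine Finset.sum_congr rfl fun j hj => ?_
  rw [Finset.mem_range] at hj
  congr 1
  rw [Finset.filter_filter]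
  refine Finset.filter_congr fun z _ => ?_
  constructor
  · rintro ⟨h1, h2⟩
    have h2' : z / q % p = j := h2
    rw [hdecomp z, h1, h2', add_comm]
  · intro h
    have h1 : z % q = R := by
      have := Nat.mod_mod_of_dvd z (dvd_mul_right q p)
      rw [h, Nat.add_mul_mod_self_left, Nat.mod_eq_of_lt hR] at this
      exact this.symm
    have h2 : z / q % p = j := by
      have := Nat.mod_mul_right_div_self z q p
      rw [h, Nat.add_mul_div_left _ _ hq, Nat.div_eq_of_lt hR] at this
      omega
    exact ⟨h1, h2⟩



lemma tzero (p L : ℕ) (hp : 0 < p) (X : Finset ℕ) (ht : tN p L X = 0) :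
    ∀ R < p^L, ∀ j < p, p ∣ (X.filter (fun z => z % p^L = R)).card →
      (X.filter (fun z => z % p^(L+1) = R + p^L * j)).card
        = (X.filter (fun z => z % p^L = R)).card / p := by
  set q := p^L with hqdef
  have hq : 0 < q := pow_pos hp L
  have hqp : p^(L+1) = q * p := pow_succ p L
  set n2 : ℕ → ℕ := fun S => (X.filter (fun z => z % (q*p) = S)).card with hn2
  set n1 : ℕ → ℕ := fun R => (X.filter (fun z => z % q = R)).card with hn1
  set F : ℕ → ℕ := fun R => ∑ j ∈ Finset.range p, (j * n2 (R + q*j) + p * C2 (n2 (R + q*j)))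
    with hF
  have hstar1 : hL p L X + ∑ R ∈ Finset.range q, C2 (n1 R) = ∑ x ∈ X, x / q := star p L hp X
  have hstar2 : hL p (L+1) X + ∑ S ∈ Finset.range (q*p), C2 (n2 S) = ∑ x ∈ X, x / (q*p) := by
    have := star p (L+1) hp X
    rwa [hqp] at this
  have hptw : ∑ x ∈ X, x / q = p * (∑ x ∈ X, x / (q*p)) + ∑ x ∈ X, (x / q % p) := by
    rw [Finset.mul_sum, ← Finset.sum_add_distrib]
    refine Finset.sum_congr rfl fun x _ => ?_
    rw [← Nat.div_div_eq_div_mul]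
    exact (Nat.div_add_mod (x / q) p).symm
  have hsplit : ∀ R < q, n1 R = ∑ j ∈ Finset.range p, n2 (R + q*j) := by
    intro R hR
    exact fiber_split q p R hq hp hR X
  -- regroup: p * B + D = ∑ F
  have hregroup : p * (∑ S ∈ Finset.range (q*p), C2 (n2 S)) + ∑ x ∈ X, (x / q % p)
      = ∑ R ∈ Finset.range q, F R := by
    rw [Dsum q p hq hp X, sum_range_mul q p hq (fun S => C2 (n2 S)),
      sum_range_mul q p hq (fun S => (S / q) * n2 S)]
    have hdig : ∀ R ∈ Finset.range q, ∀ j ∈ Finset.range p,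
        ((R + q*j) / q) * n2 (R + q*j) = j * n2 (R + q*j) := by
      intro R hR j _
      rw [Finset.mem_range] at hR
      rw [Nat.add_mul_div_left _ _ hq, Nat.div_eq_of_lt hR, Nat.zero_add]
    rw [Finset.sum_congr rfl fun R hR =>
      Finset.sum_congr rfl fun j hj => hdig R hR j hj]
    rw [Finset.mul_sum, ← Finset.sum_add_distrib]
    refine Finset.sum_congr rfl fun R _ => ?_
    rw [hF]
    simp only
    rw [Finset.mul_sum, ← Finset.sum_add_distrib]
    refine Finset.sum_congr rfl fun j _ => ?_
    ring
  -- master equation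
  have hkey : hL p L X + ∑ R ∈ Finset.range q, C2 (n1 R)
      = p * hL p (L+1) X + ∑ R ∈ Finset.range q, F R := by
    rw [hstar1, hptw, ← hregroup, ← hstar2]
    ring
  have hFle : ∀ R ∈ Finset.range q, C2 (n1 R) ≤ F R := by
    intro R hR
    rw [Finset.mem_range] at hR
    rw [hsplit R hR]
    exact balanced_le p (fun j => n2 (R + q*j)) hp
  have hAF : ∑ R ∈ Finset.range q, C2 (n1 R) ≤ ∑ R ∈ Finset.range q, F R :=
    Finset.sum_le_sum hFle
  have hle : hL p L X ≤ p * hL p (L+1) X := Nat.sub_eq_zero_iff_le.mp ht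
  have hAeq : ∑ R ∈ Finset.range q, C2 (n1 R) = ∑ R ∈ Finset.range q, F R := by omega
  have hall := (Finset.sum_eq_sum_iff_of_le hFle).mp hAeq
  intro R hR j hj hdvd
  have hFR : F R = C2 (∑ j ∈ Finset.range p, n2 (R + q*j)) := by
    rw [← hsplit R hR]
    exact (hall R (Finset.mem_range.mpr hR)).symm
  have hdvd' : p ∣ ∑ j ∈ Finset.range p, n2 (R + q*j) := by rwa [← hsplit R hR]
  have := balanced_eq p (fun j => n2 (R + q*j)) hp hFR hdvd' j hj
  rw [← hsplit R hR] at this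
  show n2 (R + q * j) = n1 R / p
  -- goal currently about p^(L+1); fix below
  exact this

/-- If `ord(X) = M > 0` (i.e. `t_L(X) = 0` for `L < M` and `t_M(X) ≠ 0`) and
`p^M ∣ |X|`, then for every `L ≤ M` the elements of `X` are equidistributed
among the residues mod `p^L`: each class has exactly `|X| / p^L` elements. -/
theorem stmt19 (p M : ℕ) (hp : 1 < p) (hM : 0 < M) (X : Finset ℕ)
    (h0 : ∀ L < M, tN p L X = 0) (hMne : tN p M X ≠ 0)
    (hcard : X.card % p ^ M = 0) :
    ∀ L ≤ M, ∀ R < p ^ L, (X.filter fun z => z % p ^ L = R).card = X.card / p ^ L := by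
  have hp0 : 0 < p := by omega
  intro L
  induction L with
  | zero =>
    intro _ R hR
    have hR0 : R = 0 := by simpa using hR
    subst hR0
    rw [pow_zero, Nat.div_one, Finset.filter_true_of_mem (fun z _ => Nat.mod_one z)]
  | succ L ih =>
    intro hL1 S hS
    have hLM : L < M := by omega
    have ihL := ih (by omega)
    have hq : 0 < p ^ L := pow_pos hp0 L
    have hqp : p ^ (L+1) = p ^ L * p := pow_succ p L
    have hR : S % p ^ L < p ^ L := Nat.mod_lt S hq
    have hj : S / p ^ L < p := by
      rw [Nat.div_lt_iff_lt_mul hq, mul_comm, ← hqp]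
      exact hS
    have hSdecomp : S % p ^ L + p ^ L * (S / p ^ L) = S := Nat.mod_add_div S (p ^ L)
    have hnR := ihL (S % p ^ L) hR
    have hdvdM : p ^ M ∣ X.card := Nat.dvd_of_mod_eq_zero hcard
    have hdvdL1 : p ^ (L+1) ∣ X.card := dvd_trans (pow_dvd_pow p hL1) hdvdM
    have hdvdL : p ^ L ∣ X.card := dvd_trans (pow_dvd_pow p (by omega)) hdvdM
    have hdvd : p ∣ (X.filter (fun z => z % p ^ L = S % p ^ L)).card := by
      rw [hnR, Nat.dvd_div_iff_mul_dvd hdvdL]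
      rwa [← hqp]
    have := tzero p L hp0 X (h0 L hLM) (S % p ^ L) hR (S / p ^ L) hj hdvd
    rw [hSdecomp] at this
    rw [this, hnR, Nat.div_div_eq_div_mul, ← hqp]
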